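/- For every integer r ≥ 1, the series ∑_{k=0}^{∞} 1/((k+1)(r+k+1)²) converges and equals H_r/r² − (ζ(2) − H_r^{(2)})/r, where H_r = ∑_{k=1}^{r} 1/k and H_r^{(2)} = ∑_{k=1}^{r} 1/k². -/

import Mathlib

open Finset Filter Topology

/-- For every integer `r ≥ 1`, `∑_{k=0}^∞ 1/((k+1)(r+k+1)²)` converges and equals
`H_r/r² - (ζ(2) - H_r⁽²⁾)/r`, where `H_r = ∑_{k=1}^r 1/k`, `H_r⁽²⁾ = ∑_{k=1}^r 1/k²`
and `ζ(2) = ∑_{k=1}^∞ 1/k²`. -/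
theorem stmt_7 (r : ℕ) (hr : 1 ≤ r) :
    HasSum (fun k : ℕ => 1 / (((k : ℝ) + 1) * ((r : ℝ) + k + 1) ^ 2))
      ((∑ i ∈ Finset.Icc 1 r, 1 / (i : ℝ)) / (r : ℝ) ^ 2 -
        ((∑' k : ℕ, 1 / ((k : ℝ) + 1) ^ 2) -
          ∑ i ∈ Finset.Icc 1 r, 1 / (i : ℝ) ^ 2) / r) := by
  have hr0 : (0:ℝ) < r := by exact_mod_cast hr
  set g : ℕ → ℝ := fun k => 1 / ((k : ℝ) + 1) with hg
  set f2 : ℕ → ℝ := fun k => 1 / ((k : ℝ) + 1) ^ 2 with hf2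
  -- summability of the shifted zeta(2) series
  have hbase : Summable (fun n : ℕ => 1 / (n : ℝ) ^ 2) :=
    Real.summable_one_div_nat_pow.mpr one_lt_two
  have hS : Summable f2 := by
    have := (summable_nat_add_iff 1).mpr hbase
    simpa [hf2] using this
  -- series B : shifted zeta(2)
  have hB : HasSum (fun k : ℕ => f2 (k + r))
      ((∑' k : ℕ, f2 k) - ∑ i ∈ range r, f2 i) := by
    have h1 : HasSum (fun k : ℕ => f2 (k + r)) (∑' k : ℕ, f2 (k + r)) :=
      ((summable_nat_add_iff r).mpr hS).hasSum
    have h2 : ∑ i ∈ range r, f2 i + ∑' k : ℕ, f2 (k + r) = ∑' k : ℕ, f2 k :=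
      Summable.sum_add_tsum_nat_add r hS
    rw [eq_sub_of_add_eq' h2] at h1
    exact h1
  -- decay of g along shifts
  have htend : ∀ i : ℕ, Tendsto (fun n : ℕ => g (n + i)) atTop (𝓝 0) := by
    intro i
    have h := (tendsto_atTop_add_const_right atTop ((i:ℝ)+1)
      tendsto_natCast_atTop_atTop).inv_tendsto_atTop
    have heq : (fun n : ℕ => g (n + i)) = (fun n : ℕ => ((n:ℝ) + ((i:ℝ)+1))⁻¹) := by
      funext n; simp only [hg, one_div]; congr 1; push_cast; ring
    rw [heq]
    exact h
  -- telescoping partial sums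
  have hpart : ∀ n : ℕ, ∑ k ∈ range n, (g k - g (k + r))
      = ∑ i ∈ range r, (g i - g (n + i)) := by
    intro n
    induction n with
    | zero => simp
    | succ n ih =>
      rw [Finset.sum_range_succ, ih]
      have h3 : ∑ i ∈ range r, (g (n + i) - g (n + (i+1))) = g (n + 0) - g (n + r) :=
        Finset.sum_range_sub' (fun i => g (n + i)) r
      have h4 : ∀ i, n + 1 + i = n + (i + 1) := fun i => by ring
      simp only [h4, Nat.add_zero] at *
      simp only [Finset.sum_sub_distrib] at h3 ⊢
      linarith
  -- series A : telescoping harmonic difference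
  have hA : HasSum (fun k : ℕ => g k - g (k + r)) (∑ i ∈ range r, g i) := by
    rw [hasSum_iff_tendsto_nat_of_nonneg]
    · simp only [hpart]
      have : Tendsto (fun n : ℕ => ∑ i ∈ range r, (g i - g (n + i))) atTop
          (𝓝 (∑ i ∈ range r, (g i - 0))) := by
        apply tendsto_finset_sum
        intro i _
        exact tendsto_const_nhds.sub (htend i)
      simpa using this
    · intro k
      simp only [hg, sub_nonneg]
      apply div_le_div_of_nonneg_left (by norm_num) (by positivity)
      push_cast; linarith [Nat.cast_nonneg (α := ℝ) r]
  -- Icc sums as range sums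
  have hIcc1 : ∑ i ∈ Finset.Icc 1 r, 1 / (i : ℝ) = ∑ i ∈ range r, g i := by
    rw [← Finset.Ico_add_one_right_eq_Icc, Finset.sum_Ico_eq_sum_range]
    simp only [Nat.add_sub_cancel, hg]
    apply Finset.sum_congr rfl
    intro i _; push_cast; ring_nf
  have hIcc2 : ∑ i ∈ Finset.Icc 1 r, 1 / (i : ℝ) ^ 2 = ∑ i ∈ range r, f2 i := by
    rw [← Finset.Ico_add_one_right_eq_Icc, Finset.sum_Ico_eq_sum_range]
    simp only [Nat.add_sub_cancel, hf2]
    apply Finset.sum_congr rfl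
    intro i _; push_cast; ring_nf
  rw [hIcc1, hIcc2]
  have hmain := (hA.div_const ((r:ℝ)^2)).sub (hB.div_const r)
  convert hmain using 2 with k
  case e'_3 => rfl
  have hk1 : ((k:ℝ) + 1) ≠ 0 := by positivity
  have hkr : ((r:ℝ) + k + 1) ≠ 0 := by positivity
  have hrne : (r:ℝ) ≠ 0 := ne_of_gt hr0
  simp only [hg, hf2]
  push_cast
  field_simp
  ring
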